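/- (Single-batch unbiasedness) Let Z be a nonempty finite set, T a nonempty subset of Z, s : T → ℝ a score function, and m ≥ 1. For x ∈ Z^m, let N(x) be the number of indices i with x(i) ∈ T, and define A(x) = (1/N(x)) · Σ_{i : x(i) ∈ T} s(x(i)) if N(x) > 0 and A(x) = 0 otherwise. If x is drawn uniformly at random from Z^m and P₁ = 1 − ((|Z| − |T|)/|Z|)^m, then 𝔼[A(x)] = P₁ · s_T, where s_T = (1/|T|) Σ_{t ∈ T} s(t). -/

import Mathlib

open Finset

/-- The number of coordinates of the tuple `x : Z^m` that lie in `T`. -/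
def hitCount {Z : Type*} [DecidableEq Z] (T : Finset Z) {m : ℕ} (x : Fin m → Z) : ℕ :=
  (Finset.univ.filter fun i => x i ∈ T).card

/-- `A(x)`: the average of the score `s` over the coordinates of `x` lying in `T`
if at least one coordinate lies in `T`, and `0` otherwise. -/
noncomputable def batchAvg {Z : Type*} [DecidableEq Z] (T : Finset Z) (s : T → ℝ)
    {m : ℕ} (x : Fin m → Z) : ℝ :=
  if h : 0 < hitCount T x then
    (∑ i ∈ (Finset.univ.filter fun i => x i ∈ T).attach,
        s ⟨x i.1, (Finset.mem_filter.mp i.2).2⟩) / (hitCount T x : ℝ)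
  else 0

section Aux

variable {Z : Type*} [Fintype Z] [DecidableEq Z]

/-- The number of coordinates of `x` equal to a given value `t`. -/
def cntVal (t : Z) {m : ℕ} (x : Fin m → Z) : ℕ :=
  (Finset.univ.filter fun i => x i = t).card

omit [Fintype Z] in
lemma sum_cntVal (T : Finset Z) {m : ℕ} (x : Fin m → Z) :
    ∑ t ∈ T.attach, cntVal (t : Z) x = hitCount T x := by
  rw [Finset.sum_attach T (fun t => cntVal t x)]
  rw [hitCount, Finset.card_eq_sum_card_fiberwise
    (f := x) (s := Finset.univ.filter fun i => x i ∈ T) (t := T) (fun i hi => (Finset.mem_filter.mp hi).2)]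
  refine Finset.sum_congr rfl fun t ht => ?_
  rw [cntVal, Finset.filter_filter]
  congr 1
  ext i
  simp (config := {contextual := true}) [ht]

lemma numer_eq (T : Finset Z) (s : T → ℝ) {m : ℕ} (x : Fin m → Z) :
    (∑ i ∈ (Finset.univ.filter fun i => x i ∈ T).attach,
        s ⟨x i.1, (Finset.mem_filter.mp i.2).2⟩)
      = ∑ t ∈ T.attach, s t * (cntVal (t : Z) x : ℝ) := by
  classical
  set g : Z → ℝ := fun z => if h : z ∈ T then s ⟨z, h⟩ else 0 with hg
  have hg0 : ∀ z ∉ T, g z = 0 := fun z hz => by rw [hg]; simp [dif_neg hz]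
  have hgs : ∀ t : T, s t = g t := fun t => by rw [hg]; simp [dif_pos t.2]
  have h1 : (∑ i ∈ (Finset.univ.filter fun i => x i ∈ T).attach,
      s ⟨x i.1, (Finset.mem_filter.mp i.2).2⟩) = ∑ i : Fin m, g (x i) := by
    have hcongr : ∀ i ∈ (Finset.univ.filter fun i => x i ∈ T).attach,
        s ⟨x i.1, (Finset.mem_filter.mp i.2).2⟩ = g (x i.1) := by
      intro i _
      rw [hg]
      simp [dif_pos (Finset.mem_filter.mp i.2).2]
    rw [Finset.sum_congr rfl hcongr,
      Finset.sum_attach _ (fun i => g (x i)), Finset.sum_filter]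
    refine Finset.sum_congr rfl fun i _ => ?_
    by_cases h : x i ∈ T
    · rw [if_pos h]
    · rw [if_neg h, hg0 (x i) h]
  have h2 : ∑ t ∈ T.attach, s t * (cntVal (t : Z) x : ℝ)
      = ∑ z : Z, g z * (cntVal z x : ℝ) := by
    rw [Finset.sum_congr rfl (fun t _ => by rw [hgs t]),
      Finset.sum_attach T (fun z => g z * ((cntVal z x : ℕ) : ℝ))]
    exact (Finset.sum_subset (Finset.subset_univ T)
      (f := fun z => g z * ((cntVal z x : ℕ) : ℝ))
      (fun z _ hz => by simp [hg0 z hz]))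
  rw [h1, h2]
  have h3 : ∀ z : Z, ((cntVal z x : ℕ) : ℝ) = ∑ i : Fin m, if x i = z then (1:ℝ) else 0 := by
    intro z; rw [cntVal, Finset.card_filter]; push_cast; rfl
  simp_rw [h3, Finset.mul_sum, mul_ite, mul_one, mul_zero]
  rw [Finset.sum_comm]
  refine Finset.sum_congr rfl fun i _ => ?_
  simp

lemma batchAvg_eq (T : Finset Z) (s : T → ℝ) {m : ℕ} (x : Fin m → Z) :
    batchAvg T s x
      = ∑ t ∈ T.attach, s t * ((cntVal (t : Z) x : ℝ) / (hitCount T x : ℝ)) := by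
  rw [batchAvg]
  split_ifs with h
  · rw [numer_eq, Finset.sum_div]
    exact Finset.sum_congr rfl fun t _ => (mul_div_assoc _ _ _)
  · have h0 : hitCount T x = 0 := Nat.eq_zero_of_not_pos h
    rw [h0]
    simp

lemma W_invariant (T : Finset Z) {m : ℕ} (t t' : T) :
    ∑ x : Fin m → Z, ((cntVal (t : Z) x : ℝ) / (hitCount T x : ℝ))
      = ∑ x : Fin m → Z, ((cntVal (t' : Z) x : ℝ) / (hitCount T x : ℝ)) := by
  set σ := Equiv.swap (t : Z) (t' : Z) with hσ
  have hσT : ∀ z : Z, σ z ∈ T ↔ z ∈ T := by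
    intro z
    rcases eq_or_ne z (t : Z) with h | h
    · simp [hσ, h, Equiv.swap_apply_left, t.2, t'.2]
    rcases eq_or_ne z (t' : Z) with h' | h'
    · simp [hσ, h', Equiv.swap_apply_right, t.2, t'.2]
    · rw [hσ, Equiv.swap_apply_of_ne_of_ne h h']
  refine Fintype.sum_equiv (Equiv.piCongrRight fun _ => σ) _ _ fun x => ?_
  have hc : cntVal (t' : Z) ((Equiv.piCongrRight fun _ => σ) x) = cntVal (t : Z) x := by
    unfold cntVal
    congr 1
    ext i
    simp only [Finset.mem_filter, Finset.mem_univ, true_and, Equiv.piCongrRight_apply,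
      Pi.map_apply]
    constructor
    · intro h
      have := congrArg σ.symm h
      simpa [hσ, Equiv.swap_apply_right] using this
    · intro h; rw [h, hσ, Equiv.swap_apply_left]
  have hh : hitCount T ((Equiv.piCongrRight fun _ => σ) x) = hitCount T x := by
    unfold hitCount
    congr 1
    ext i
    simp [hσT]
  rw [hc, hh]

lemma count_hit (T : Finset Z) (m : ℕ) :
    ∑ x : Fin m → Z, (if 0 < hitCount T x then (1:ℝ) else 0)
      = (Fintype.card Z : ℝ) ^ m - ((Fintype.card Z : ℝ) - (T.card : ℝ)) ^ m := by
  classical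
  rw [Finset.sum_boole]
  have hmiss : (Finset.univ.filter fun x : Fin m → Z => ¬ 0 < hitCount T x)
      = Fintype.piFinset (fun _ : Fin m => Tᶜ) := by
    ext x
    simp only [Finset.mem_filter, Finset.mem_univ, true_and, Fintype.mem_piFinset,
      Finset.mem_compl, Nat.pos_iff_ne_zero, not_not, hitCount, Finset.card_eq_zero,
      Finset.filter_eq_empty_iff]
    simp
  have htot := Finset.card_filter_add_card_filter_not
    (s := (Finset.univ : Finset (Fin m → Z))) (p := fun x => 0 < hitCount T x)
  rw [hmiss, Fintype.card_piFinset] at htot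
  have h1 : ((Finset.univ.filter fun x : Fin m → Z => 0 < hitCount T x).card : ℕ)
      + (Tᶜ.card) ^ m = (Fintype.card Z) ^ m := by
    simpa [Finset.card_univ, Fintype.card_pi] using htot
  have h2 : (Tᶜ.card : ℝ) = (Fintype.card Z : ℝ) - (T.card : ℝ) := by
    rw [Finset.card_compl]
    have := Finset.card_le_univ T
    push_cast [Nat.cast_sub this, Finset.card_univ]
    rfl
  have hcast := congrArg (fun n : ℕ => (n : ℝ)) h1
  push_cast at hcast
  rw [h2] at hcast
  linarith

end Aux

/-- **Single-batch unbiasedness.** For a nonempty finite set `Z`, a nonempty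
`T ⊆ Z`, a score `s : T → ℝ` and `m ≥ 1`, the expectation over a uniform `x ∈ Z^m` of
`A(x)` equals `P₁ · s_T` where `P₁ = 1 - ((|Z| - |T|)/|Z|)^m` and
`s_T = (1/|T|) Σ_{t ∈ T} s t`. -/
theorem single_batch_unbiasedness
    {Z : Type*} [Fintype Z] [DecidableEq Z] [Nonempty Z]
    (T : Finset Z) (hT : T.Nonempty) (s : T → ℝ) (m : ℕ) (hm : 1 ≤ m) :
    (∑ x : Fin m → Z, batchAvg T s x) / (Fintype.card (Fin m → Z) : ℝ)
      = (1 - (((Fintype.card Z : ℝ) - (T.card : ℝ)) / (Fintype.card Z : ℝ)) ^ m)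
        * ((∑ t ∈ T.attach, s t) / (T.card : ℝ)) := by
  classical
  obtain ⟨t₀z, ht₀z⟩ := hT
  set t₀ : T := ⟨t₀z, ht₀z⟩
  set W : T → ℝ := fun t => ∑ x : Fin m → Z, ((cntVal (t : Z) x : ℝ) / (hitCount T x : ℝ))
    with hW
  set c : ℝ := (Fintype.card Z : ℝ) with hcdef
  set k : ℝ := (T.card : ℝ) with hkdef
  set M : ℝ := c ^ m - (c - k) ^ m with hM
  have hWconst : ∀ t : T, W t = W t₀ := fun t => W_invariant T t t₀
  -- total sum of batchAvg
  have hsum : ∑ x : Fin m → Z, batchAvg T s x = (∑ t ∈ T.attach, s t) * W t₀ := by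
    calc ∑ x : Fin m → Z, batchAvg T s x
        = ∑ x : Fin m → Z, ∑ t ∈ T.attach,
            s t * ((cntVal (t : Z) x : ℝ) / (hitCount T x : ℝ)) :=
          Finset.sum_congr rfl fun x _ => batchAvg_eq T s x
      _ = ∑ t ∈ T.attach, ∑ x : Fin m → Z,
            s t * ((cntVal (t : Z) x : ℝ) / (hitCount T x : ℝ)) := Finset.sum_comm
      _ = ∑ t ∈ T.attach, s t * W t := by
          refine Finset.sum_congr rfl fun t _ => ?_
          rw [hW, Finset.mul_sum]
      _ = ∑ t ∈ T.attach, s t * W t₀ := by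
          refine Finset.sum_congr rfl fun t _ => by rw [hWconst t]
      _ = (∑ t ∈ T.attach, s t) * W t₀ := by rw [Finset.sum_mul]
  -- sum of W over T equals M
  have hWsum : k * W t₀ = M := by
    have h1 : ∑ t ∈ T.attach, W t = k * W t₀ := by
      rw [Finset.sum_congr rfl fun t _ => hWconst t, Finset.sum_const]
      simp [hkdef, nsmul_eq_mul]
    have h2 : ∑ t ∈ T.attach, W t = M := by
      rw [hW]
      rw [Finset.sum_comm]
      have hx : ∀ x : Fin m → Z,
          ∑ t ∈ T.attach, ((cntVal (t : Z) x : ℝ) / (hitCount T x : ℝ))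
            = (if 0 < hitCount T x then (1:ℝ) else 0) := by
        intro x
        rw [← Finset.sum_div]
        have : ∑ t ∈ T.attach, ((cntVal (t : Z) x : ℝ)) = (hitCount T x : ℝ) := by
          rw [← Nat.cast_sum]
          exact_mod_cast congrArg (fun n : ℕ => (n : ℝ)) (sum_cntVal T x)
        rw [this]
        split_ifs with h
        · rw [div_self]
          exact_mod_cast Nat.pos_iff_ne_zero.mp h
        · rw [Nat.eq_zero_of_not_pos h]
          simp
      rw [Finset.sum_congr rfl fun x _ => hx x, count_hit T m, hM, hcdef, hkdef]
    rw [← h1, h2]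
  have hc0 : (0:ℝ) < c := by
    rw [hcdef]; exact_mod_cast Fintype.card_pos
  have hk0 : (0:ℝ) < k := by
    rw [hkdef]; exact_mod_cast Finset.card_pos.mpr ⟨t₀z, ht₀z⟩
  have hWt₀ : W t₀ = M / k := by
    field_simp at hWsum ⊢
    linarith
  rw [hsum, hWt₀]
  have hcardfun : (Fintype.card (Fin m → Z) : ℝ) = c ^ m := by
    rw [hcdef]
    rw [Fintype.card_fun]
    push_cast
    simp
  rw [hcardfun, hM]
  rw [div_pow]
  field_simp
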